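/- Let E be the characteristic equation system of a finitary pLTS and ρ_E its greatest solution. Then for all states s and t: s ∼ t if and only if t ∈ ρ_E(X_s). -/

import Mathlib

open scoped Classical

/-- A (discrete) probability distribution over a finite set `S`. -/
structure FDist (S : Type*) [Fintype S] where
  f : S → ℝ
  nonneg : ∀ s, 0 ≤ f s
  sum_one : ∑ s, f s = 1

/-- The point distribution at `s`. -/
noncomputable def FDist.point {S : Type*} [Fintype S] (s : S) : FDist S where
  f := fun u => if u = s then 1 else 0
  nonneg := by intro u; by_cases h : u = s <;> simp [h]
  sum_one := by simp

/-- The lifting `R†` of a relation to distributions: the smallest relation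
relating point distributions of related states and closed under convex
combinations. -/
inductive Lift {S T : Type*} [Fintype S] [Fintype T] (R : S → T → Prop) :
    FDist S → FDist T → Prop
  | point {s : S} {t : T} :
      R s t → Lift R (FDist.point s) (FDist.point t)
  | convex (I : Finset ℕ) (p : ℕ → ℝ)
      (hp : ∀ i ∈ I, 0 ≤ p i) (hsum : ∑ i ∈ I, p i = 1)
      (Δs : ℕ → FDist S) (Θs : ℕ → FDist T)
      (h : ∀ i ∈ I, Lift R (Δs i) (Θs i))
      (Δ : FDist S) (Θ : FDist T)
      (hΔ : Δ.f = ∑ i ∈ I, p i • (Δs i).f)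
      (hΘ : Θ.f = ∑ i ∈ I, p i • (Θs i).f) :
      Lift R Δ Θ
/-- A (finitary) probabilistic labelled transition system over a finite set of
states. -/
structure PLTS (S : Type*) [Fintype S] (Act : Type*) where
  trans : S → Act → FDist S → Prop

/-- A pLTS is finitely branching if every state has finitely many outgoing
transitions; a finitary pLTS is a finitely branching pLTS with finitely many
states. -/
def FinitelyBranching {S : Type*} [Fintype S] {Act : Type*} (L : PLTS S Act) : Prop :=
  ∀ s, { p : Act × FDist S | L.trans s p.1 p.2 }.Finite

/-- `R` is a probabilistic bisimulation if, whenever `s R t`, each transition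
of either state is matched by a transition of the other, with the resulting
distributions related by the lifted relation `R†`. -/
def IsBisimulation {S : Type*} [Fintype S] {Act : Type*} (L : PLTS S Act)
    (R : S → S → Prop) : Prop :=
  ∀ s t, R s t →
    (∀ a Δ, L.trans s a Δ → ∃ Θ, L.trans t a Θ ∧ Lift R Δ Θ) ∧
    (∀ a Θ, L.trans t a Θ → ∃ Δ, L.trans s a Δ ∧ Lift R Δ Θ)

/-- Probabilistic bisimilarity `∼`: the largest probabilistic bisimulation. -/
def Bisim {S : Type*} [Fintype S] {Act : Type*} (L : PLTS S Act) (s t : S) : Prop :=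
  ∃ R, IsBisimulation L R ∧ R s t

mutual
/-- State formulae of the probabilistic modal mu-calculus, with variables
taken to be the states themselves (`X_s` for each state `s`):
`φ ::= ⊤ | ⊥ | ⟨a⟩ψ | [a]ψ | φ₁∧φ₂ | φ₁∨φ₂ | X | μX.φ | νX.φ`. -/
inductive MuF (Act S : Type) : Type
  | top : MuF Act S
  | bot : MuF Act S
  | dia (a : Act) (ψ : MuD Act S) : MuF Act S
  | box (a : Act) (ψ : MuD Act S) : MuF Act S
  | and (φ₁ φ₂ : MuF Act S) : MuF Act S
  | or (φ₁ φ₂ : MuF Act S) : MuF Act S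
  | var (X : S) : MuF Act S
  | mu (X : S) (φ : MuF Act S) : MuF Act S
  | nu (X : S) (φ : MuF Act S) : MuF Act S

/-- Distribution formulae `ψ ::= ⊕_{i∈I} p_i·φ_i` (probabilistic choice over a
finite tuple of probabilities summing to `1`), together with finite
disjunctions of distribution formulae (`⊥` being the empty disjunction), as
used in characteristic formulae. -/
inductive MuD (Act S : Type) : Type
  | pchoice (n : ℕ) (p : Fin n → ℝ)
      (hp : ∀ i, 0 ≤ p i) (hsum : ∑ i, p i = 1)
      (φ : Fin n → MuF Act S) : MuD Act S
  | dbot : MuD Act S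
  | dor (ψ₁ ψ₂ : MuD Act S) : MuD Act S
end

mutual
/-- The semantics `⟦φ⟧ρ ⊆ S` of a state formula in environment `ρ`; least and
greatest fixed points are given by Knaster–Tarski. -/
noncomputable def msem {S Act : Type} [Fintype S] [DecidableEq S] (L : PLTS S Act) :
    MuF Act S → (S → Set S) → Set S
  | .top, _ => Set.univ
  | .bot, _ => ∅
  | .dia a ψ, ρ => { s | ∃ Δ, L.trans s a Δ ∧ Δ ∈ dsem L ψ ρ }
  | .box a ψ, ρ => { s | ∀ Δ, L.trans s a Δ → Δ ∈ dsem L ψ ρ }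
  | .and φ₁ φ₂, ρ => msem L φ₁ ρ ∩ msem L φ₂ ρ
  | .or φ₁ φ₂, ρ => msem L φ₁ ρ ∪ msem L φ₂ ρ
  | .var X, ρ => ρ X
  | .mu X φ, ρ => ⋂₀ { V : Set S | msem L φ (Function.update ρ X V) ⊆ V }
  | .nu X φ, ρ => ⋃₀ { V : Set S | V ⊆ msem L φ (Function.update ρ X V) }

/-- The semantics `⟦ψ⟧ρ ⊆ D(S)` of a distribution formula:
`Δ ⊨ ⊕ᵢ pᵢ·φᵢ` iff `Δ` decomposes as a convex combination `∑ i, p i • Δs i`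
with every state in the support of `Δs i` satisfying `φ i`. -/
noncomputable def dsem {S Act : Type} [Fintype S] [DecidableEq S] (L : PLTS S Act) :
    MuD Act S → (S → Set S) → Set (FDist S)
  | .pchoice n p _ _ φ, ρ =>
      { Δ | ∃ Δs : Fin n → FDist S,
          Δ.f = ∑ i, p i • (Δs i).f ∧
          ∀ i, ∀ t, (Δs i).f t ≠ 0 → t ∈ msem L (φ i) ρ }
  | .dbot, _ => ∅
  | .dor ψ₁ ψ₂, ρ => dsem L ψ₁ ρ ∪ dsem L ψ₂ ρ
end
/-- The support of a distribution on a finite set, as a `Finset`. -/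
noncomputable def suppF {S : Type} [Fintype S] (Δ : FDist S) : Finset S :=
  Finset.univ.filter (fun t => Δ.f t ≠ 0)

/-- The distribution formula `X_Δ := ⊕_{s ∈ supp Δ} Δ(s)·X_s`. -/
noncomputable def XD {S Act : Type} [Fintype S] (Δ : FDist S) : MuD Act S :=
  MuD.pchoice (suppF Δ).card
    (fun i => Δ.f ((suppF Δ).equivFin.symm i))
    (fun _ => Δ.nonneg _)
    (by
      rw [Equiv.sum_comp (suppF Δ).equivFin.symm (fun x : (suppF Δ) => Δ.f x)]
      rw [Finset.sum_coe_sort]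
      rw [suppF, Finset.sum_filter_ne_zero]
      exact Δ.sum_one)
    (fun i => MuF.var ((suppF Δ).equivFin.symm i))

/-- Finite conjunction of state formulae (`⊤` for the empty conjunction). -/
def bigAnd {Act S : Type} : List (MuF Act S) → MuF Act S
  | [] => .top
  | φ :: l => .and φ (bigAnd l)

/-- Finite disjunction of distribution formulae (`⊥` for the empty one). -/
def bigDOr {Act S : Type} : List (MuD Act S) → MuD Act S
  | [] => .dbot
  | ψ :: l => .dor ψ (bigDOr l)

/-- The right-hand side `φ_s` of the characteristic equation for state `s`:
`φ_s := (⋀_{s −a→ Δ} ⟨a⟩X_Δ) ∧ (⋀_{a ∈ Act} [a] ⋁_{s −a→ Δ} X_Δ)`. -/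
noncomputable def charForm {S Act : Type} [Fintype S] [Fintype Act]
    (L : PLTS S Act) (hfb : FinitelyBranching L) (s : S) : MuF Act S :=
  MuF.and
    (bigAnd (((hfb s).toFinset.toList).map (fun q => MuF.dia q.1 (XD q.2))))
    (bigAnd (((Finset.univ : Finset Act).toList).map (fun a =>
      MuF.box a (bigDOr
        ((((hfb s).toFinset.filter (fun q => q.1 = a)).toList).map
          (fun q => XD q.2))))))

/-- The greatest solution `ρ_E` of the characteristic equation system: the
largest post-fixed point of the (monotone) equation functional
`ρ ↦ (X ↦ ⟦φ_X⟧ρ)` on the complete lattice of environments. -/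
noncomputable def charSolution {S Act : Type} [Fintype S] [DecidableEq S] [Fintype Act]
    (L : PLTS S Act) (hfb : FinitelyBranching L) : S → Set S :=
  sSup { ρ : S → Set S | ρ ≤ fun X => msem L (charForm L hfb X) ρ }

section AuxProof

variable {S : Type} [Fintype S]

theorem FDist.nonempty_of (Δ : FDist S) : Nonempty S := by
  by_contra h
  rw [not_nonempty_iff] at h
  have h1 := Δ.sum_one
  rw [Finset.univ_eq_empty, Finset.sum_empty] at h1
  norm_num at h1

theorem lift_mono {T : Type} [Fintype T] {R R' : S → T → Prop}
    (h : ∀ s t, R s t → R' s t) {Δ : FDist S} {Θ : FDist T} (hl : Lift R Δ Θ) :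
    Lift R' Δ Θ := by
  induction hl with
  | point h' => exact .point (h _ _ h')
  | convex I p hp hsum Δs Θs h' Δ Θ hΔ hΘ ih =>
      exact .convex I p hp hsum Δs Θs ih Δ Θ hΔ hΘ

theorem bisim_isBisim {Act : Type} (L : PLTS S Act) : IsBisimulation L (Bisim L) := by
  rintro s t ⟨R, hR, hst⟩
  obtain ⟨h1, h2⟩ := hR s t hst
  constructor
  · intro a Δ hΔ
    obtain ⟨Θ, hΘ, hl⟩ := h1 a Δ hΔ
    exact ⟨Θ, hΘ, lift_mono (fun u v huv => ⟨R, hR, huv⟩) hl⟩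
  · intro a Θ hΘ
    obtain ⟨Δ, hΔ, hl⟩ := h2 a Θ hΘ
    exact ⟨Δ, hΔ, lift_mono (fun u v huv => ⟨R, hR, huv⟩) hl⟩

noncomputable def gIdx (S : Type) [Fintype S] [Nonempty S] : ℕ → S := fun i =>
  if h : i < Fintype.card S then (Fintype.equivFin S).symm ⟨i, h⟩ else Classical.arbitrary S

theorem sum_gIdx [Nonempty S] {M : Type} [AddCommMonoid M] (F : S → M) :
    ∑ i ∈ Finset.range (Fintype.card S), F (gIdx S i) = ∑ u, F u := by
  rw [← Fin.sum_univ_eq_sum_range (fun i => F (gIdx S i)) (Fintype.card S)]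
  rw [← Equiv.sum_comp (Fintype.equivFin S).symm F]
  refine Finset.sum_congr rfl fun i _ => ?_
  have hi : (i : ℕ) < Fintype.card S := i.isLt
  simp [gIdx, hi]

theorem sum_filter_gIdx [Nonempty S] (w : S → ℝ) (F : S → S → ℝ) :
    ∑ i ∈ (Finset.range (Fintype.card S)).filter (fun i => w (gIdx S i) ≠ 0),
      w (gIdx S i) • F (gIdx S i) = ∑ u, w u • F u := by
  rw [Finset.sum_filter_of_ne, sum_gIdx (fun u => w u • F u)]
  intro i _ hne hw
  exact hne (by rw [hw, zero_smul])

theorem sum_filter_gIdx' [Nonempty S] (w : S → ℝ) :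
    ∑ i ∈ (Finset.range (Fintype.card S)).filter (fun i => w (gIdx S i) ≠ 0),
      w (gIdx S i) = ∑ u, w u := by
  rw [Finset.sum_filter_ne_zero, sum_gIdx w]

theorem fdist_sum_point [DecidableEq S] (Δ : FDist S) :
    Δ.f = ∑ u, Δ.f u • (FDist.point u).f := by
  funext v
  rw [Finset.sum_apply, Finset.sum_eq_single v]
  · simp [FDist.point]
  · intro u _ hu
    simp [FDist.point, Ne.symm hu]
  · simp

theorem lift_point_left [DecidableEq S] {R : S → S → Prop} {u : S} {Θ : FDist S}
    (h : ∀ v, Θ.f v ≠ 0 → R u v) : Lift R (FDist.point u) Θ := by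
  have hne : Nonempty S := ⟨u⟩
  have hs : ∑ i ∈ (Finset.range (Fintype.card S)).filter
      (fun i => Θ.f (gIdx S i) ≠ 0), Θ.f (gIdx S i) = 1 := by
    rw [sum_filter_gIdx']; exact Θ.sum_one
  refine Lift.convex ((Finset.range (Fintype.card S)).filter fun i => Θ.f (gIdx S i) ≠ 0)
    (fun i => Θ.f (gIdx S i)) (fun i _ => Θ.nonneg _) hs
    (fun _ => FDist.point u) (fun i => FDist.point (gIdx S i))
    (fun i hi => Lift.point (h _ (Finset.mem_filter.mp hi).2))
    (FDist.point u) Θ ?_ ?_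
  · rw [← Finset.sum_smul, hs, one_smul]
  · rw [sum_filter_gIdx Θ.f (fun v => (FDist.point v).f)]
    exact fdist_sum_point Θ

theorem lift_of_decomp [DecidableEq S] {R : S → S → Prop} {Δ Θ : FDist S}
    (Θm : S → FDist S) (hΘ : Θ.f = ∑ u, Δ.f u • (Θm u).f)
    (hpt : ∀ u, Δ.f u ≠ 0 → ∀ v, (Θm u).f v ≠ 0 → R u v) : Lift R Δ Θ := by
  have hne : Nonempty S := Δ.nonempty_of
  have hs : ∑ i ∈ (Finset.range (Fintype.card S)).filter
      (fun i => Δ.f (gIdx S i) ≠ 0), Δ.f (gIdx S i) = 1 := by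
    rw [sum_filter_gIdx']; exact Δ.sum_one
  refine Lift.convex ((Finset.range (Fintype.card S)).filter fun i => Δ.f (gIdx S i) ≠ 0)
    (fun i => Δ.f (gIdx S i)) (fun i _ => Δ.nonneg _) hs
    (fun i => FDist.point (gIdx S i)) (fun i => Θm (gIdx S i))
    (fun i hi => lift_point_left (hpt _ (Finset.mem_filter.mp hi).2)) Δ Θ ?_ ?_
  · rw [sum_filter_gIdx Δ.f (fun w => (FDist.point w).f)]
    exact fdist_sum_point Δ
  · rw [sum_filter_gIdx Δ.f (fun w => (Θm w).f)]
    exact hΘ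

theorem decomp_of_lift [DecidableEq S] {R : S → S → Prop} {Δ Θ : FDist S}
    (hl : Lift R Δ Θ) :
    ∃ Θm : S → FDist S, Θ.f = ∑ u, Δ.f u • (Θm u).f ∧
      ∀ u, Δ.f u ≠ 0 → ∀ v, (Θm u).f v ≠ 0 → R u v := by
  induction hl with
  | @point s t hst =>
    refine ⟨fun u => if u = s then FDist.point t else FDist.point u, ?_, ?_⟩
    · funext v
      rw [Finset.sum_apply, Finset.sum_eq_single s]
      · simp [FDist.point]
      · intro u _ hu
        simp [FDist.point, hu]
      · simp
    · intro u hu v hv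
      have hus : u = s := by
        by_contra hc
        simp [FDist.point, hc] at hu
      subst hus
      simp only [if_pos rfl] at hv
      have hvt : v = t := by
        by_contra hc
        simp [FDist.point, hc] at hv
      subst hvt
      exact hst
  | convex I p hp hsum Δs Θs h Δ Θ hΔ hΘ ih =>
    have hne : Nonempty S := Δ.nonempty_of
    haveI : Nonempty (FDist S) := ⟨FDist.point (Classical.arbitrary S)⟩
    choose! Θm hm1 hm2 using ih
    have hΔu : ∀ u, Δ.f u = ∑ i ∈ I, p i * (Δs i).f u := by
      intro u
      rw [hΔ, Finset.sum_apply]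
      rfl
    have hkey : ∀ u, Δ.f u = 0 → ∀ i ∈ I, p i * (Δs i).f u = 0 := by
      intro u hu i hi
      have h0 : ∑ j ∈ I, p j * (Δs j).f u = 0 := by rw [← hΔu, hu]
      exact (Finset.sum_eq_zero_iff_of_nonneg
        (fun j hj => mul_nonneg (hp j hj) ((Δs j).nonneg u))).mp h0 i hi
    have hGnn : ∀ u v, 0 ≤ (Δ.f u)⁻¹ * ∑ i ∈ I, p i * ((Δs i).f u * (Θm i u).f v) :=
      fun u v => mul_nonneg (inv_nonneg.mpr (Δ.nonneg u))
        (Finset.sum_nonneg fun i hi => mul_nonneg (hp i hi)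
          (mul_nonneg ((Δs i).nonneg u) ((Θm i u).nonneg v)))
    have hGsum : ∀ u, Δ.f u ≠ 0 →
        ∑ v, (Δ.f u)⁻¹ * ∑ i ∈ I, p i * ((Δs i).f u * (Θm i u).f v) = 1 := by
      intro u hu
      rw [← Finset.mul_sum, Finset.sum_comm]
      have hinner : ∑ i ∈ I, ∑ v, p i * ((Δs i).f u * (Θm i u).f v)
          = ∑ i ∈ I, p i * (Δs i).f u := by
        refine Finset.sum_congr rfl fun i hi => ?_
        rw [← Finset.mul_sum, ← Finset.mul_sum, (Θm i u).sum_one, mul_one]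
      rw [hinner, ← hΔu u, inv_mul_cancel₀ hu]
    refine ⟨fun u => if hu : Δ.f u = 0 then FDist.point (Classical.arbitrary S)
      else ⟨fun v => (Δ.f u)⁻¹ * ∑ i ∈ I, p i * ((Δs i).f u * (Θm i u).f v),
            fun v => hGnn u v, hGsum u hu⟩, ?_, ?_⟩
    · funext v
      rw [hΘ, Finset.sum_apply, Finset.sum_apply]
      have hstep : ∀ i ∈ I, (p i • (Θs i).f) v
          = ∑ u, p i * ((Δs i).f u * (Θm i u).f v) := by
        intro i hi
        rw [Pi.smul_apply, smul_eq_mul, hm1 i hi, Finset.sum_apply, Finset.mul_sum]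
        refine Finset.sum_congr rfl fun u _ => ?_
        rw [Pi.smul_apply, smul_eq_mul]
      rw [Finset.sum_congr rfl hstep, Finset.sum_comm]
      refine Finset.sum_congr rfl fun u _ => ?_
      by_cases hu : Δ.f u = 0
      · rw [Pi.smul_apply, hu, zero_smul]
        refine Finset.sum_eq_zero fun i hi => ?_
        rcases mul_eq_zero.mp (hkey u hu i hi) with hc | hc
        · rw [hc, zero_mul]
        · rw [hc, zero_mul, mul_zero]
      · simp only [Pi.smul_apply, dif_neg hu, smul_eq_mul]
        rw [← mul_assoc, mul_inv_cancel₀ hu, one_mul]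
    · intro u hu v hv
      simp only [dif_neg hu] at hv
      have hsne : ∑ i ∈ I, p i * ((Δs i).f u * (Θm i u).f v) ≠ 0 :=
        fun hz => hv (by rw [hz, mul_zero])
      obtain ⟨i, hi, hne'⟩ := Finset.exists_ne_zero_of_sum_ne_zero hsne
      have h1 : (Δs i).f u ≠ 0 := fun hz => hne' (by rw [hz, zero_mul, mul_zero])
      have h2 : (Θm i u).f v ≠ 0 := fun hz => hne' (by rw [hz, mul_zero, mul_zero])
      exact hm2 i hi u h1 v h2

theorem sum_suppF [DecidableEq S] (Δ : FDist S) (F : S → S → ℝ) :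
    ∑ i : Fin (suppF Δ).card,
        Δ.f ((suppF Δ).equivFin.symm i) • F ((suppF Δ).equivFin.symm i)
      = ∑ u, Δ.f u • F u := by
  rw [Equiv.sum_comp (suppF Δ).equivFin.symm (fun x : (suppF Δ) => Δ.f x • F x)]
  rw [Finset.sum_coe_sort (suppF Δ) (fun u => Δ.f u • F u)]
  refine Finset.sum_subset (Finset.subset_univ _) fun u _ hu => ?_
  simp only [suppF, Finset.mem_filter, Finset.mem_univ, true_and, not_not] at hu
  rw [hu, zero_smul]

theorem mem_dsem_XD {Act : Type} [DecidableEq S] (L : PLTS S Act) (Δ Θ : FDist S)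
    (ρ : S → Set S) :
    Θ ∈ dsem L (XD Δ) ρ ↔ ∃ Θm : S → FDist S, Θ.f = ∑ u, Δ.f u • (Θm u).f ∧
      ∀ u, Δ.f u ≠ 0 → ∀ v, (Θm u).f v ≠ 0 → v ∈ ρ u := by
  rw [XD]
  simp only [dsem, msem, Set.mem_setOf_eq]
  constructor
  · rintro ⟨Δs, hsum, hmem⟩
    refine ⟨fun u => if h : u ∈ suppF Δ then Δs ((suppF Δ).equivFin ⟨u, h⟩)
      else FDist.point u, ?_, ?_⟩
    · rw [hsum, ← sum_suppF Δ (fun u =>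
        (if h : u ∈ suppF Δ then Δs ((suppF Δ).equivFin ⟨u, h⟩) else FDist.point u).f)]
      refine Finset.sum_congr rfl fun i _ => ?_
      have h2 : ((suppF Δ).equivFin.symm i : S) ∈ suppF Δ := ((suppF Δ).equivFin.symm i).2
      rw [dif_pos h2]
      congr 2
      simp
    · intro u hu v hv
      have hu' : u ∈ suppF Δ := by
        simp only [suppF, Finset.mem_filter, Finset.mem_univ, true_and]
        exact hu
      simp only [dif_pos hu'] at hv
      have := hmem ((suppF Δ).equivFin ⟨u, hu'⟩) v hv
      simpa using this
  · rintro ⟨Θm, hsum, hmem⟩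
    refine ⟨fun i => Θm ((suppF Δ).equivFin.symm i), ?_, ?_⟩
    · rw [hsum, ← sum_suppF Δ (fun u => (Θm u).f)]
    · intro i v hv
      have hmemS : ((suppF Δ).equivFin.symm i : S) ∈ suppF Δ := ((suppF Δ).equivFin.symm i).2
      have hne : Δ.f ((suppF Δ).equivFin.symm i : S) ≠ 0 := by
        have h3 : ((suppF Δ).equivFin.symm i : S) ∈ Finset.univ.filter (fun t => Δ.f t ≠ 0) := hmemS
        exact (Finset.mem_filter.mp h3).2
      exact hmem _ hne v hv

theorem mem_bigAnd {Act : Type} [DecidableEq S] (L : PLTS S Act)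
    (l : List (MuF Act S)) (ρ : S → Set S) (t : S) :
    t ∈ msem L (bigAnd l) ρ ↔ ∀ φ ∈ l, t ∈ msem L φ ρ := by
  induction l with
  | nil => simp [bigAnd, msem]
  | cons φ l ih =>
    simp only [bigAnd, msem, Set.mem_inter_iff, ih, List.mem_cons]
    constructor
    · rintro ⟨h1, h2⟩ ψ (rfl | hψ)
      · exact h1
      · exact h2 _ hψ
    · intro h
      exact ⟨h φ (Or.inl rfl), fun ψ hψ => h ψ (Or.inr hψ)⟩

theorem mem_bigDOr {Act : Type} [DecidableEq S] (L : PLTS S Act)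
    (l : List (MuD Act S)) (ρ : S → Set S) (Θ : FDist S) :
    Θ ∈ dsem L (bigDOr l) ρ ↔ ∃ ψ ∈ l, Θ ∈ dsem L ψ ρ := by
  induction l with
  | nil => simp [bigDOr, dsem]
  | cons ψ l ih =>
    simp only [bigDOr, dsem, Set.mem_union, ih, List.mem_cons]
    constructor
    · rintro (h | ⟨ψ', hψ', h⟩)
      · exact ⟨ψ, Or.inl rfl, h⟩
      · exact ⟨ψ', Or.inr hψ', h⟩
    · rintro ⟨ψ', (rfl | hψ'), h⟩
      · exact Or.inl h
      · exact Or.inr ⟨ψ', hψ', h⟩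

theorem mem_charForm {Act : Type} [DecidableEq S] [Fintype Act] (L : PLTS S Act)
    (hfb : FinitelyBranching L) (s t : S) (ρ : S → Set S) :
    t ∈ msem L (charForm L hfb s) ρ ↔
      ((∀ a Δ, L.trans s a Δ → ∃ Θ, L.trans t a Θ ∧ Θ ∈ dsem L (XD Δ) ρ) ∧
       (∀ a Θ, L.trans t a Θ → ∃ Δ, L.trans s a Δ ∧ Θ ∈ dsem L (XD Δ) ρ)) := by
  rw [charForm]
  simp only [msem, Set.mem_inter_iff]
  rw [mem_bigAnd, mem_bigAnd]
  apply and_congr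
  · constructor
    · intro h a Δ hΔ
      have hm := h (MuF.dia a (XD Δ)) (by
        rw [List.mem_map]
        refine ⟨(a, Δ), ?_, rfl⟩
        rw [Finset.mem_toList, Set.Finite.mem_toFinset]
        exact hΔ)
      simpa [msem] using hm
    · intro h φ hφ
      rw [List.mem_map] at hφ
      obtain ⟨q, hq, rfl⟩ := hφ
      rw [Finset.mem_toList, Set.Finite.mem_toFinset] at hq
      have hm := h q.1 q.2 hq
      simpa [msem] using hm
  · constructor
    · intro h a Θ hΘ
      have hm := h (MuF.box a (bigDOr
          ((((hfb s).toFinset.filter (fun q => q.1 = a)).toList).map (fun q => XD q.2))))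
        (by rw [List.mem_map]; exact ⟨a, by simp, rfl⟩)
      simp only [msem, Set.mem_setOf_eq] at hm
      have h2 := hm Θ hΘ
      rw [mem_bigDOr] at h2
      obtain ⟨ψ, hψ, hmemψ⟩ := h2
      rw [List.mem_map] at hψ
      obtain ⟨q, hq, rfl⟩ := hψ
      rw [Finset.mem_toList, Finset.mem_filter, Set.Finite.mem_toFinset] at hq
      refine ⟨q.2, ?_, hmemψ⟩
      rw [← hq.2]
      exact hq.1
    · intro h φ hφ
      rw [List.mem_map] at hφ
      obtain ⟨a, _, rfl⟩ := hφ
      simp only [msem, Set.mem_setOf_eq]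
      intro Θ hΘ
      obtain ⟨Δ, hΔ, hd⟩ := h a Θ hΘ
      rw [mem_bigDOr]
      refine ⟨XD Δ, ?_, hd⟩
      rw [List.mem_map]
      refine ⟨(a, Δ), ?_, rfl⟩
      rw [Finset.mem_toList, Finset.mem_filter, Set.Finite.mem_toFinset]
      exact ⟨hΔ, rfl⟩

theorem mem_charForm_mono {Act : Type} [DecidableEq S] [Fintype Act] (L : PLTS S Act)
    (hfb : FinitelyBranching L) (s t : S) {ρ ρ' : S → Set S} (h : ρ ≤ ρ')
    (ht : t ∈ msem L (charForm L hfb s) ρ) : t ∈ msem L (charForm L hfb s) ρ' := by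
  rw [mem_charForm] at ht ⊢
  have hd : ∀ Δ Θ, Θ ∈ dsem L (XD Δ) ρ → Θ ∈ dsem L (XD Δ) ρ' := by
    intro Δ Θ hΘ
    rw [mem_dsem_XD] at hΘ ⊢
    obtain ⟨Θm, h1, h2⟩ := hΘ
    exact ⟨Θm, h1, fun u hu v hv => h u (h2 u hu v hv)⟩
  exact ⟨fun a Δ hΔ => (ht.1 a Δ hΔ).imp fun Θ hΘ => ⟨hΘ.1, hd _ _ hΘ.2⟩,
         fun a Θ hΘ => (ht.2 a Θ hΘ).imp fun Δ hΔ => ⟨hΔ.1, hd _ _ hΔ.2⟩⟩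

theorem mem_charSolution {Act : Type} [DecidableEq S] [Fintype Act] (L : PLTS S Act)
    (hfb : FinitelyBranching L) {X : S} {t : S} :
    t ∈ charSolution L hfb X ↔ ∃ ρ : S → Set S,
      (ρ ≤ fun Y => msem L (charForm L hfb Y) ρ) ∧ t ∈ ρ X := by
  rw [charSolution]
  rw [sSup_apply]
  simp only [Set.iSup_eq_iUnion, Set.mem_iUnion, Set.mem_setOf_eq]
  constructor
  · rintro ⟨⟨ρ, hρ⟩, ht⟩
    exact ⟨ρ, hρ, ht⟩
  · rintro ⟨ρ, hρ, ht⟩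
    exact ⟨⟨ρ, hρ⟩, ht⟩

theorem charSolution_post {Act : Type} [DecidableEq S] [Fintype Act] (L : PLTS S Act)
    (hfb : FinitelyBranching L) (X : S) :
    charSolution L hfb X ⊆ msem L (charForm L hfb X) (charSolution L hfb) := by
  intro t ht
  rw [mem_charSolution] at ht
  obtain ⟨ρ, hρ, htρ⟩ := ht
  have hle : ρ ≤ charSolution L hfb :=
    le_sSup (show ρ ∈ {ρ : S → Set S | ρ ≤ fun Y => msem L (charForm L hfb Y) ρ} from hρ)
  exact mem_charForm_mono L hfb X t hle (hρ X htρ)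

end AuxProof

/-- For a finitary pLTS with characteristic equation system `E` and greatest
solution `ρ_E`: `s ∼ t` iff `t ∈ ρ_E(X_s)`. -/
theorem bisim_iff_mem_charSolution {S Act : Type} [Fintype S] [DecidableEq S]
    [Fintype Act] (L : PLTS S Act) (hfb : FinitelyBranching L) (s t : S) :
    Bisim L s t ↔ t ∈ charSolution L hfb s := by
  constructor
  · intro hst
    have hmem : (fun u => {v | Bisim L u v}) ∈
        {ρ : S → Set S | ρ ≤ fun X => msem L (charForm L hfb X) ρ} := by
      intro u v huv
      rw [mem_charForm]
      obtain ⟨h1, h2⟩ := bisim_isBisim L u v huv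
      constructor
      · intro a Δ hΔ
        obtain ⟨Θ, hΘ, hl⟩ := h1 a Δ hΔ
        refine ⟨Θ, hΘ, ?_⟩
        rw [mem_dsem_XD]
        exact decomp_of_lift hl
      · intro a Θ hΘ
        obtain ⟨Δ, hΔ, hl⟩ := h2 a Θ hΘ
        refine ⟨Δ, hΔ, ?_⟩
        rw [mem_dsem_XD]
        exact decomp_of_lift hl
    exact le_sSup hmem s hst
  · intro ht
    refine ⟨fun u v => v ∈ charSolution L hfb u, ?_, ht⟩
    intro u v huv
    have h := charSolution_post L hfb u huv
    rw [mem_charForm] at h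
    constructor
    · intro a Δ hΔ
      obtain ⟨Θ, hΘ, hd⟩ := h.1 a Δ hΔ
      rw [mem_dsem_XD] at hd
      obtain ⟨Θm, h1, h2⟩ := hd
      exact ⟨Θ, hΘ, lift_of_decomp Θm h1 h2⟩
    · intro a Θ hΘ
      obtain ⟨Δ, hΔ, hd⟩ := h.2 a Θ hΘ
      rw [mem_dsem_XD] at hd
      obtain ⟨Θm, h1, h2⟩ := hd
      exact ⟨Δ, hΔ, lift_of_decomp Θm h1 h2⟩
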